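/- There exists a constant C > 0 (depending only on K) such that for all λ > 0 and x > 0: | 2x · ∂²Ĉ/∂x²(λ, x) + x² · ∂³Ĉ/∂x³(λ, x) | ≤ C x^{−1/2} (1 + λ^{−1}) e^{−λ/8}. Equivalently, the spatial derivative of A(λ, x) = x² ∂²Ĉ/∂x²(λ, x) is bounded by C x^{−1/2} (1 + λ^{−1}) e^{−λ/8}. -/

import Mathlib

open MeasureTheory

/-- Standard normal density φ(a) = (2π)^{−1/2} e^{−a²/2}. -/
noncomputable def stdNormalPdf (a : ℝ) : ℝ :=
  (Real.sqrt (2 * Real.pi))⁻¹ * Real.exp (-(a ^ 2) / 2)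

/-- Standard normal distribution function Φ(a) = ∫_{−∞}^a φ(s) ds. -/
noncomputable def stdNormalCdf (a : ℝ) : ℝ :=
  ∫ s in Set.Iio a, stdNormalPdf s

/-- d(λ, x) = ln(x/K)/√λ + √λ/2. -/
noncomputable def bsD (K lam x : ℝ) : ℝ :=
  Real.log (x / K) / Real.sqrt lam + Real.sqrt lam / 2

/-- Black–Scholes call price with strike K, zero interest rate and total
remaining variance λ: Ĉ(λ, x) = x Φ(d(λ, x)) − K Φ(d(λ, x) − √λ). -/
noncomputable def bsPrice (K lam x : ℝ) : ℝ :=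
  x * stdNormalCdf (bsD K lam x) - K * stdNormalCdf (bsD K lam x - Real.sqrt lam)

/- STATEMENT 15: There exists C > 0 (depending only on K) such that for all
   λ > 0 and x > 0:
   |2x ∂²Ĉ/∂x²(λ,x) + x² ∂³Ĉ/∂x³(λ,x)| ≤ C x^{−1/2} (1 + λ^{−1}) e^{−λ/8};
   this bounds the spatial derivative of A(λ,x) = x² ∂²Ĉ/∂x²(λ,x). -/
lemma pdf_cont : Continuous stdNormalPdf := by
  unfold stdNormalPdf; fun_prop

lemma pdf_integrable : Integrable stdNormalPdf := by
  have h : Integrable (fun x : ℝ => Real.exp (-(1/2 : ℝ) * x ^ 2)) := integrable_exp_neg_mul_sq (by norm_num)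
  have : stdNormalPdf = fun a => (Real.sqrt (2 * Real.pi))⁻¹ * Real.exp (-(1/2:ℝ) * a ^ 2) := by
    funext a; unfold stdNormalPdf; ring_nf
  rw [this]
  exact h.const_mul _

lemma cdf_eq (a : ℝ) : stdNormalCdf a = stdNormalCdf 0 + ∫ t in (0:ℝ)..a, stdNormalPdf t := by
  have h1 : ∀ b : ℝ, stdNormalCdf b = ∫ s in Set.Iic b, stdNormalPdf s := by
    intro b
    unfold stdNormalCdf
    refine setIntegral_congr_set ?_
    exact Iio_ae_eq_Iic
  rw [h1 a, h1 0]
  rw [← intervalIntegral.integral_Iic_sub_Iic (pdf_integrable.integrableOn) (pdf_integrable.integrableOn)]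
  ring

lemma hasDerivAt_cdf (a : ℝ) : HasDerivAt stdNormalCdf (stdNormalPdf a) a := by
  have h : HasDerivAt (fun b => ∫ t in (0:ℝ)..b, stdNormalPdf t) (stdNormalPdf a) a := by
    refine intervalIntegral.integral_hasDerivAt_right (pdf_integrable.intervalIntegrable)
      (pdf_cont.aestronglyMeasurable.stronglyMeasurableAtFilter) (pdf_cont.continuousAt)
  have := (h.const_add (stdNormalCdf 0))
  refine this.congr_of_eventuallyEq ?_
  filter_upwards with b
  rw [cdf_eq b]

lemma hasDerivAt_pdf (a : ℝ) : HasDerivAt stdNormalPdf (-a * stdNormalPdf a) a := by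
  unfold stdNormalPdf
  have h1 : HasDerivAt (fun b : ℝ => -(b ^ 2) / 2) (-a) a := by
    have := ((hasDerivAt_pow 2 a).neg).div_const 2
    simpa using this.congr_deriv (by ring)
  have h2 := (h1.exp).const_mul (Real.sqrt (2 * Real.pi))⁻¹
  exact h2.congr_deriv (by ring)

lemma hasDerivAt_bsD (K : ℝ) (hK : 0 < K) (lam : ℝ) (hlam : 0 < lam) (x : ℝ) (hx : 0 < x) :
    HasDerivAt (bsD K lam) (1 / (x * Real.sqrt lam)) x := by
  have hlog : HasDerivAt (fun y : ℝ => Real.log (y / K)) (1 / x) x := by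
    have h : HasDerivAt (fun y : ℝ => y / K) (1 / K) x := (hasDerivAt_id x).div_const K |>.congr_deriv (by ring)
    have := h.log (by positivity)
    refine this.congr_deriv ?_
    field_simp
  have h2 := (hlog.div_const (Real.sqrt lam)).add_const (Real.sqrt lam / 2)
  refine h2.congr_deriv ?_
  rw [one_div, one_div, div_eq_mul_inv, mul_inv]

lemma bs_identity (K : ℝ) (hK : 0 < K) (lam : ℝ) (hlam : 0 < lam) (x : ℝ) (hx : 0 < x) :
    x * stdNormalPdf (bsD K lam x) = K * stdNormalPdf (bsD K lam x - Real.sqrt lam) := by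
  set s := Real.sqrt lam with hs
  have hs2 : s ^ 2 = lam := Real.sq_sqrt hlam.le
  have hspos : 0 < s := Real.sqrt_pos.mpr hlam
  set d := bsD K lam x with hd
  have hds : d * s = Real.log (x / K) + lam / 2 := by
    rw [hd]; unfold bsD
    rw [← hs, ← hs2]
    field_simp
  unfold stdNormalPdf
  have hexp : Real.exp (-((d - s) ^ 2) / 2) = Real.exp (-(d ^ 2) / 2) * (x / K) := by
    have h1 : -((d - s) ^ 2) / 2 = -(d ^ 2) / 2 + (d * s - lam / 2) := by
      rw [← hs2]; ring
    rw [h1, Real.exp_add, hds]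
    congr 1
    have : Real.log (x / K) + lam / 2 - lam / 2 = Real.log (x / K) := by ring
    rw [this, Real.exp_log (by positivity)]
  rw [hexp]
  field_simp

lemma hasDerivAt_bs1 (K : ℝ) (hK : 0 < K) (lam : ℝ) (hlam : 0 < lam) (x : ℝ) (hx : 0 < x) :
    HasDerivAt (bsPrice K lam) (stdNormalCdf (bsD K lam x)) x := by
  have hd := hasDerivAt_bsD K hK lam hlam x hx
  have h1 : HasDerivAt (fun y => y * stdNormalCdf (bsD K lam y))
      (stdNormalCdf (bsD K lam x) + x * (stdNormalPdf (bsD K lam x) * (1 / (x * Real.sqrt lam)))) x := by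
    simpa [Function.comp_def, Pi.mul_def] using (hasDerivAt_id x).mul ((hasDerivAt_cdf (bsD K lam x)).comp x hd)
  have h2 : HasDerivAt (fun y => K * stdNormalCdf (bsD K lam y - Real.sqrt lam))
      (K * (stdNormalPdf (bsD K lam x - Real.sqrt lam) * (1 / (x * Real.sqrt lam)))) x := by
    simpa [Function.comp] using (((hasDerivAt_cdf (bsD K lam x - Real.sqrt lam)).comp x (hd.sub_const _))).const_mul K
  have h3 := h1.sub h2
  have heq : bsPrice K lam = fun y => y * stdNormalCdf (bsD K lam y) - K * stdNormalCdf (bsD K lam y - Real.sqrt lam) := rfl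
  rw [heq]
  refine h3.congr_deriv ?_
  have hid := bs_identity K hK lam hlam x hx
  linear_combination hid * (1 / (x * Real.sqrt lam))

lemma hasDerivAt_bs2 (K : ℝ) (hK : 0 < K) (lam : ℝ) (hlam : 0 < lam) (x : ℝ) (hx : 0 < x) :
    HasDerivAt (fun y => stdNormalCdf (bsD K lam y))
      (stdNormalPdf (bsD K lam x) * (1 / (x * Real.sqrt lam))) x := by
  simpa [Function.comp_def] using
    (hasDerivAt_cdf (bsD K lam x)).comp x (hasDerivAt_bsD K hK lam hlam x hx)

lemma hasDerivAt_bs3 (K : ℝ) (hK : 0 < K) (lam : ℝ) (hlam : 0 < lam) (x : ℝ) (hx : 0 < x) :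
    HasDerivAt (fun y => stdNormalPdf (bsD K lam y) * (1 / (y * Real.sqrt lam)))
      (-(bsD K lam x) * stdNormalPdf (bsD K lam x) * (1 / (x * Real.sqrt lam)) * (1 / (x * Real.sqrt lam))
        + stdNormalPdf (bsD K lam x) * (-(Real.sqrt lam) / (x * Real.sqrt lam) ^ 2)) x := by
  have h1 : HasDerivAt (fun y => stdNormalPdf (bsD K lam y))
      (-(bsD K lam x) * stdNormalPdf (bsD K lam x) * (1 / (x * Real.sqrt lam))) x := by
    simpa [Function.comp_def] using
      (hasDerivAt_pdf (bsD K lam x)).comp x (hasDerivAt_bsD K hK lam hlam x hx)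
  have hs : 0 < Real.sqrt lam := Real.sqrt_pos.mpr hlam
  have h2 : HasDerivAt (fun y : ℝ => 1 / (y * Real.sqrt lam))
      (-(Real.sqrt lam) / (x * Real.sqrt lam) ^ 2) x := by
    have hne : x * Real.sqrt lam ≠ 0 := by positivity
    have hb : HasDerivAt (fun y : ℝ => y * Real.sqrt lam) (Real.sqrt lam) x := by
      simpa using (hasDerivAt_id x).mul_const (Real.sqrt lam)
    simpa only [one_div, Pi.inv_def] using (hb.inv hne)
  exact h1.mul h2

lemma iteratedDeriv2_eq (K : ℝ) (hK : 0 < K) (lam : ℝ) (hlam : 0 < lam) (x : ℝ) (hx : 0 < x) :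
    iteratedDeriv 2 (bsPrice K lam) x = stdNormalPdf (bsD K lam x) * (1 / (x * Real.sqrt lam)) := by
  have hev : deriv (bsPrice K lam) =ᶠ[nhds x] fun y => stdNormalCdf (bsD K lam y) := by
    filter_upwards [eventually_gt_nhds hx] with y hy
    exact (hasDerivAt_bs1 K hK lam hlam y hy).deriv
  rw [iteratedDeriv_succ, iteratedDeriv_one, hev.deriv_eq]
  exact (hasDerivAt_bs2 K hK lam hlam x hx).deriv

lemma iteratedDeriv3_eq (K : ℝ) (hK : 0 < K) (lam : ℝ) (hlam : 0 < lam) (x : ℝ) (hx : 0 < x) :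
    iteratedDeriv 3 (bsPrice K lam) x =
      -(bsD K lam x) * stdNormalPdf (bsD K lam x) * (1 / (x * Real.sqrt lam)) * (1 / (x * Real.sqrt lam))
        + stdNormalPdf (bsD K lam x) * (-(Real.sqrt lam) / (x * Real.sqrt lam) ^ 2) := by
  have hev : iteratedDeriv 2 (bsPrice K lam) =ᶠ[nhds x]
      fun y => stdNormalPdf (bsD K lam y) * (1 / (y * Real.sqrt lam)) := by
    filter_upwards [eventually_gt_nhds hx] with y hy
    exact iteratedDeriv2_eq K hK lam hlam y hy
  rw [iteratedDeriv_succ, hev.deriv_eq]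
  exact (hasDerivAt_bs3 K hK lam hlam x hx).deriv

lemma inv_sqrt_le (lam : ℝ) (hlam : 0 < lam) : 1 / Real.sqrt lam ≤ 1 + lam⁻¹ := by
  set s := Real.sqrt lam with hs
  have hspos : 0 < s := Real.sqrt_pos.mpr hlam
  have hs2 : s ^ 2 = lam := Real.sq_sqrt hlam.le
  rw [← hs2]
  rw [div_le_iff₀ hspos]
  have h1 : (1 + (s^2)⁻¹) * s = s + 1/s := by field_simp
  rw [h1]
  have h2 : s * (1/s) = 1 := by field_simp
  nlinarith [sq_nonneg (s - 1), div_pos one_pos hspos]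

lemma abs_u_exp_le (lam u : ℝ) (hlam : 0 < lam) :
    Real.exp (-(u ^ 2) / (2 * lam)) * |u| ≤ Real.sqrt lam := by
  set s := Real.sqrt lam with hs
  have hspos : 0 < s := Real.sqrt_pos.mpr hlam
  have hs2 : s ^ 2 = lam := Real.sq_sqrt hlam.le
  have hkey : |u| ≤ s * Real.exp (u ^ 2 / (2 * lam)) := by
    have h1 : 1 + u ^ 2 / (2 * lam) ≤ Real.exp (u ^ 2 / (2 * lam)) := by
      have := Real.add_one_le_exp (u ^ 2 / (2 * lam)); linarith
    have h2 : |u| ≤ s * (1 + u ^ 2 / (2 * lam)) := by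
      rw [← hs2]
      have hx : s * (1 + u ^ 2 / (2 * s ^ 2)) = s + u ^ 2 / (2 * s) := by field_simp
      rw [hx]
      have h2s : (0:ℝ) < 2 * s := by positivity
      have key : |u| ≤ (2 * s ^ 2 + u ^ 2) / (2 * s) := by
        rw [le_div_iff₀ h2s]
        nlinarith [sq_nonneg (s - |u|), sq_abs u]
      have heq : (2 * s ^ 2 + u ^ 2) / (2 * s) = s + u ^ 2 / (2 * s) := by
        field_simp
      linarith [heq ▸ key]
    calc |u| ≤ s * (1 + u ^ 2 / (2 * lam)) := h2
      _ ≤ s * Real.exp (u ^ 2 / (2 * lam)) := by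
          exact mul_le_mul_of_nonneg_left h1 hspos.le
  have hepos : 0 < Real.exp (-(u ^ 2) / (2 * lam)) := Real.exp_pos _
  have : Real.exp (-(u ^ 2) / (2 * lam)) * Real.exp (u ^ 2 / (2 * lam)) = 1 := by
    rw [← Real.exp_add]; ring_nf; exact Real.exp_zero
  calc Real.exp (-(u ^ 2) / (2 * lam)) * |u|
      ≤ Real.exp (-(u ^ 2) / (2 * lam)) * (s * Real.exp (u ^ 2 / (2 * lam))) :=
        mul_le_mul_of_nonneg_left hkey hepos.le
    _ = s * (Real.exp (-(u ^ 2) / (2 * lam)) * Real.exp (u ^ 2 / (2 * lam))) := by ring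
    _ = s := by rw [this, mul_one]

lemma Ebound (lam u : ℝ) (hlam : 0 < lam) :
    Real.exp (-(u ^ 2) / (2 * lam)) * |1 / 2 - u / lam| / Real.sqrt lam
      ≤ 3 / 2 * (1 + lam⁻¹) := by
  set s := Real.sqrt lam with hs
  have hspos : 0 < s := Real.sqrt_pos.mpr hlam
  have hs2 : s ^ 2 = lam := Real.sq_sqrt hlam.le
  set a := Real.exp (-(u ^ 2) / (2 * lam)) with ha
  have ha0 : 0 < a := Real.exp_pos _
  have ha1 : a ≤ 1 := by
    rw [ha, Real.exp_le_one_iff]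
    have : 0 ≤ u ^ 2 / (2 * lam) := by positivity
    rw [neg_div]
    linarith
  have habs : |1 / 2 - u / lam| ≤ 1 / 2 + |u| / lam := by
    have h0 : |u / lam| = |u| / lam := by rw [abs_div, abs_of_pos hlam]
    have h1 : |(1:ℝ) / 2| = 1 / 2 := by norm_num
    calc |1 / 2 - u / lam| ≤ |(1:ℝ) / 2| + |u / lam| := abs_sub _ _
      _ = 1 / 2 + |u| / lam := by rw [h0, h1]
  have h2 : a * |u| ≤ s := abs_u_exp_le lam u hlam
  have hinvs : 1 / s ≤ 1 + lam⁻¹ := inv_sqrt_le lam hlam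
  have hpos1 : (0:ℝ) ≤ 1 + lam⁻¹ := by positivity
  have step1 : a * |1 / 2 - u / lam| / s ≤ (a / 2 + a * |u| / lam) / s := by
    gcongr
    · calc a * |1 / 2 - u / lam| ≤ a * (1 / 2 + |u| / lam) :=
          mul_le_mul_of_nonneg_left habs ha0.le
        _ = a / 2 + a * |u| / lam := by ring
  have step2 : (a / 2 + a * |u| / lam) / s = (a / 2) * (1 / s) + (a * |u|) / (lam * s) := by
    field_simp
  have step3 : (a / 2) * (1 / s) ≤ (1 / 2) * (1 + lam⁻¹) := by
    have h1s : 0 < 1 / s := by positivity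
    have := mul_le_mul ha1 hinvs h1s.le (by norm_num : (0:ℝ) ≤ 1)
    calc (a / 2) * (1 / s) = (1 / 2) * (a * (1 / s)) := by ring
      _ ≤ (1 / 2) * (1 * (1 + lam⁻¹)) := by
          apply mul_le_mul_of_nonneg_left _ (by norm_num : (0:ℝ) ≤ 1/2)
          exact this
      _ = (1 / 2) * (1 + lam⁻¹) := by ring
  have step4 : (a * |u|) / (lam * s) ≤ lam⁻¹ := by
    have hls : 0 < lam * s := by positivity
    calc (a * |u|) / (lam * s) ≤ s / (lam * s) := by gcongr
      _ = lam⁻¹ := by field_simp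
  calc a * |1 / 2 - u / lam| / s ≤ (a / 2 + a * |u| / lam) / s := step1
    _ = (a / 2) * (1 / s) + (a * |u|) / (lam * s) := step2
    _ ≤ (1 / 2) * (1 + lam⁻¹) + lam⁻¹ := by linarith
    _ ≤ 3 / 2 * (1 + lam⁻¹) := by
        have := inv_pos.mpr hlam
        linarith

theorem bs_A_deriv_bound (K : ℝ) (hK : 0 < K) :
    ∃ C : ℝ, 0 < C ∧ ∀ lam x : ℝ, 0 < lam → 0 < x →
      |2 * x * iteratedDeriv 2 (bsPrice K lam) x
          + x ^ 2 * iteratedDeriv 3 (bsPrice K lam) x|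
        ≤ C * x ^ (-(1 / 2) : ℝ) * (1 + lam⁻¹) * Real.exp (-lam / 8) := by
  refine ⟨2 * Real.sqrt K, by positivity, ?_⟩
  intro lam x hlam hx
  rw [iteratedDeriv2_eq K hK lam hlam x hx, iteratedDeriv3_eq K hK lam hlam x hx]
  set s := Real.sqrt lam with hs
  have hspos : 0 < s := Real.sqrt_pos.mpr hlam
  have hs2 : s ^ 2 = lam := Real.sq_sqrt hlam.le
  set u := Real.log (x / K) with hu
  have hd : bsD K lam x = u / s + s / 2 := rfl
  set p := stdNormalPdf (bsD K lam x) with hp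
  have hppos : 0 < p := by
    rw [hp]; unfold stdNormalPdf; positivity
  have hexpr : 2 * x * (p * (1 / (x * s)))
      + x ^ 2 * (-(bsD K lam x) * p * (1 / (x * s)) * (1 / (x * s)) + p * (-s / (x * s) ^ 2))
      = p * ((1 / 2 - u / lam) / s) := by
    rw [hd, ← hs2]; field_simp; ring
  rw [hexpr, abs_mul, abs_of_pos hppos, abs_div, abs_of_pos hspos]
  have hdsq : (bsD K lam x) ^ 2 = u ^ 2 / lam + u + lam / 4 := by
    rw [hd, ← hs2]; field_simp; ring
  have hxK : (0:ℝ) < x / K := by positivity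
  have e1 : Real.exp (-u / 2) = (x / K) ^ (-(1 / 2) : ℝ) := by
    rw [Real.rpow_def_of_pos hxK, hu]
    congr 1; ring
  have e2 : ((x / K) : ℝ) ^ (-(1 / 2) : ℝ) = Real.sqrt K * x ^ (-(1 / 2) : ℝ) := by
    rw [Real.div_rpow hx.le hK.le, Real.rpow_neg hK.le, Real.sqrt_eq_rpow]
    have hKp : (0:ℝ) < K ^ ((1:ℝ)/2) := Real.rpow_pos_of_pos hK _
    field_simp
  have hpval : p = (Real.sqrt (2 * Real.pi))⁻¹ *
      (Real.exp (-(u ^ 2) / (2 * lam)) * (Real.sqrt K * x ^ (-(1 / 2) : ℝ)) * Real.exp (-lam / 8)) := by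
    rw [hp]; unfold stdNormalPdf
    rw [← e2, ← e1, ← Real.exp_add, ← Real.exp_add]
    congr 2
    linear_combination (-(1:ℝ) / 2) * hdsq
  have hc : (Real.sqrt (2 * Real.pi))⁻¹ ≤ 1 := by
    apply inv_le_one_of_one_le₀
    rw [show (1:ℝ) = Real.sqrt 1 from (Real.sqrt_one).symm]
    apply Real.sqrt_le_sqrt
    nlinarith [Real.pi_gt_three]
  have hEb : Real.exp (-(u ^ 2) / (2 * lam)) * |1 / 2 - u / lam| / s ≤ 3 / 2 * (1 + lam⁻¹) :=
    Ebound lam u hlam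
  have hX : (0:ℝ) < x ^ (-(1 / 2) : ℝ) := Real.rpow_pos_of_pos hx _
  have hP : (0:ℝ) ≤ Real.sqrt K * x ^ (-(1 / 2) : ℝ) * (1 + lam⁻¹) * Real.exp (-lam / 8) := by
    positivity
  calc p * (|1 / 2 - u / lam| / s)
      = (Real.sqrt (2 * Real.pi))⁻¹ * (Real.sqrt K * x ^ (-(1 / 2) : ℝ)) * Real.exp (-lam / 8)
          * (Real.exp (-(u ^ 2) / (2 * lam)) * |1 / 2 - u / lam| / s) := by
        rw [hpval]; ring
    _ ≤ 1 * (Real.sqrt K * x ^ (-(1 / 2) : ℝ)) * Real.exp (-lam / 8) * (3 / 2 * (1 + lam⁻¹)) := by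
        gcongr
    _ = 3 / 2 * (Real.sqrt K * x ^ (-(1 / 2) : ℝ) * (1 + lam⁻¹) * Real.exp (-lam / 8)) := by ring
    _ ≤ 2 * (Real.sqrt K * x ^ (-(1 / 2) : ℝ) * (1 + lam⁻¹) * Real.exp (-lam / 8)) := by linarith
    _ = 2 * Real.sqrt K * x ^ (-(1 / 2) : ℝ) * (1 + lam⁻¹) * Real.exp (-lam / 8) := by ring
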